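/- With notation as in the I_{2,2} factorization lemma, the sum ∑_{j=1}^{∞} 2^{j+1} · s(ℓ+1+j, ℓ+2, ℓ+1-j) equals 4·d_ℓ·s(ℓ+2,ℓ+2) when the c_k are given by ∑ c_k t^k = ((1-2at)(1-2bt)/((1-at)(1-bt)))·∑_{i=0}^ℓ d_i t^i. -/

import Mathlib

open PowerSeries Finset

/-- The ring `ℚ[a, b, d_1, …, d_ℓ]`. -/
abbrev R6 (ℓ : ℕ) := MvPolynomial (Sum (Fin 2) (Fin ℓ)) ℚ

noncomputable def va (ℓ : ℕ) : R6 ℓ := MvPolynomial.X (Sum.inl 0)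
noncomputable def vb (ℓ : ℕ) : R6 ℓ := MvPolynomial.X (Sum.inl 1)

/-- `d 0 = 1`, `d i` is the variable `d_i` for `1 ≤ i ≤ ℓ`, and `d i = 0` otherwise. -/
noncomputable def dV (ℓ : ℕ) (i : ℤ) : R6 ℓ :=
  if i = 0 then 1
  else if h : 1 ≤ i ∧ i ≤ (ℓ : ℤ) then
    MvPolynomial.X (Sum.inr ⟨(i - 1).toNat, by omega⟩) else 0

noncomputable def ee1 (ℓ : ℕ) : R6 ℓ := va ℓ + vb ℓ
noncomputable def ee2 (ℓ : ℕ) : R6 ℓ := va ℓ * vb ℓ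

noncomputable def DD (ℓ : ℕ) (n : ℤ) : R6 ℓ :=
  dV ℓ n - 2 * ee1 ℓ * dV ℓ (n-1) + 4 * ee2 ℓ * dV ℓ (n-2)

lemma dV_neg (ℓ : ℕ) {n : ℤ} (h : n < 0) : dV ℓ n = 0 := by
  unfold dV; rw [if_neg (by omega), dif_neg (by omega)]

lemma dV_big (ℓ : ℕ) {n : ℤ} (h : (ℓ:ℤ) < n) : dV ℓ n = 0 := by
  unfold dV; rw [if_neg (by omega), dif_neg (by omega)]

lemma DD_big (ℓ : ℕ) {n : ℤ} (h : (ℓ:ℤ)+2 < n) : DD ℓ n = 0 := by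
  unfold DD
  rw [dV_big ℓ (by omega), dV_big ℓ (by omega), dV_big ℓ (by omega)]
  ring

lemma DD_neg (ℓ : ℕ) {n : ℤ} (h : n < 0) : DD ℓ n = 0 := by
  unfold DD
  rw [dV_neg ℓ (by omega), dV_neg ℓ (by omega), dV_neg ℓ (by omega)]
  ring

lemma coeff_X_mul_mk (ℓ : ℕ) (c : ℤ → R6 ℓ) (hcneg : ∀ n : ℤ, n < 0 → c n = 0) (n : ℕ) :
    coeff (R := R6 ℓ) n (X * PowerSeries.mk (fun m : ℕ => c m)) = c ((n:ℤ) - 1) := by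
  cases n with
  | zero => simp [hcneg (-1) (by omega)]
  | succ m => rw [coeff_succ_X_mul, coeff_mk]; push_cast; ring_nf

lemma coeff_X2_mul_mk (ℓ : ℕ) (c : ℤ → R6 ℓ) (hcneg : ∀ n : ℤ, n < 0 → c n = 0) (n : ℕ) :
    coeff (R := R6 ℓ) n (X ^ 2 * PowerSeries.mk (fun m : ℕ => c m)) = c ((n:ℤ) - 2) := by
  rw [coeff_X_pow_mul']
  split_ifs with h
  · rw [coeff_mk]
    congr 1
    omega
  · rw [hcneg _ (by omega)]

lemma coeff_dsum (ℓ : ℕ) (n : ℕ) :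
    coeff (R := R6 ℓ) n (∑ i ∈ Finset.range (ℓ + 1), PowerSeries.C (R := R6 ℓ) (dV ℓ i) * PowerSeries.X ^ i)
      = dV ℓ n := by
  rw [map_sum]
  simp only [coeff_C_mul, coeff_X_pow]
  simp only [mul_ite, mul_one, mul_zero]
  rw [Finset.sum_ite_eq (Finset.range (ℓ+1)) n]
  by_cases h : n ∈ Finset.range (ℓ+1)
  · rw [if_pos h]
  · rw [if_neg h, eq_comm, dV_big]
    simp only [Finset.mem_range] at h
    omega

lemma key (ℓ : ℕ) (c : ℤ → R6 ℓ)
    (hcneg : ∀ n : ℤ, n < 0 → c n = 0)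
    (hc : (1 - PowerSeries.C (R := R6 ℓ) (va ℓ) * PowerSeries.X) *
          (1 - PowerSeries.C (R := R6 ℓ) (vb ℓ) * PowerSeries.X) *
          PowerSeries.mk (fun n : ℕ => c n)
        = (1 - PowerSeries.C (R := R6 ℓ) (2 * va ℓ) * PowerSeries.X) *
          (1 - PowerSeries.C (R := R6 ℓ) (2 * vb ℓ) * PowerSeries.X) *
          ∑ i ∈ Finset.range (ℓ + 1),
            PowerSeries.C (R := R6 ℓ) (dV ℓ i) * PowerSeries.X ^ i) :
    ∀ n : ℤ, c n - ee1 ℓ * c (n-1) + ee2 ℓ * c (n-2) = DD ℓ n := by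
  intro n
  rcases lt_or_ge n 0 with h | h
  · rw [hcneg n h, hcneg _ (by omega), hcneg _ (by omega), DD_neg ℓ h]; ring
  · obtain ⟨m, rfl⟩ := Int.eq_ofNat_of_zero_le h
    set S := ∑ i ∈ Finset.range (ℓ + 1), PowerSeries.C (R := R6 ℓ) (dV ℓ i) * PowerSeries.X ^ i with hS
    set f := PowerSeries.mk (fun m : ℕ => c m) with hf
    have hSmk : S = PowerSeries.mk (fun m : ℕ => dV ℓ m) := by
      ext k
      rw [coeff_mk, hS, coeff_dsum]
    have hdneg : ∀ n : ℤ, n < 0 → dV ℓ n = 0 := fun n hn => dV_neg ℓ hn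
    have hc2 : f - C (R := R6 ℓ) (ee1 ℓ) * (X * f) + C (R := R6 ℓ) (ee2 ℓ) * (X^2 * f)
        = S - C (R := R6 ℓ) (2 * ee1 ℓ) * (X * S) + C (R := R6 ℓ) (4 * ee2 ℓ) * (X^2 * S) := by
      simp only [ee1, ee2, map_mul, map_add, map_ofNat] at hc ⊢
      linear_combination hc
    have h3 := congrArg (coeff (R := R6 ℓ) m) hc2
    rw [map_add, map_add, map_sub, map_sub, coeff_C_mul, coeff_C_mul, coeff_C_mul,
      coeff_C_mul, coeff_X_mul_mk ℓ c hcneg, coeff_X2_mul_mk ℓ c hcneg, hf, coeff_mk,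
      hSmk, coeff_X_mul_mk ℓ _ hdneg, coeff_X2_mul_mk ℓ _ hdneg, coeff_mk] at h3
    rw [DD]
    linear_combination h3

noncomputable def hseq (ℓ : ℕ) : ℕ → R6 ℓ
  | 0 => 1
  | 1 => ee1 ℓ
  | (n+2) => ee1 ℓ * hseq ℓ (n+1) - ee2 ℓ * hseq ℓ n

section main
variable (ℓ : ℕ) (c : ℤ → R6 ℓ)
  (hkey : ∀ n : ℤ, c n - ee1 ℓ * c (n-1) + ee2 ℓ * c (n-2) = DD ℓ n)

include hkey

/-- the linear recurrence above degree ℓ+2 -/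
lemma crec {n : ℤ} (h : (ℓ:ℤ)+2 < n) :
    c n = ee1 ℓ * c (n-1) - ee2 ℓ * c (n-2) := by
  have := hkey n
  rw [DD_big ℓ h] at this
  linear_combination this

lemma Fval : ∀ j : ℕ, c ((ℓ:ℤ)+2+j) * c ((ℓ:ℤ)+2) - c ((ℓ:ℤ)+3+j) * c ((ℓ:ℤ)+1)
    = hseq ℓ j * (c ((ℓ:ℤ)+2) * c ((ℓ:ℤ)+2) - c ((ℓ:ℤ)+3) * c ((ℓ:ℤ)+1)) := by
  intro j
  induction j using Nat.twoStepInduction with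
  | zero =>
    push_cast
    rw [hseq]
    ring_nf
  | one =>
    have h3 : c ((ℓ:ℤ)+3) = ee1 ℓ * c ((ℓ:ℤ)+3-1) - ee2 ℓ * c ((ℓ:ℤ)+3-2) :=
      crec ℓ c hkey (by omega)
    have h4 : c ((ℓ:ℤ)+4) = ee1 ℓ * c ((ℓ:ℤ)+4-1) - ee2 ℓ * c ((ℓ:ℤ)+4-2) :=
      crec ℓ c hkey (by omega)
    rw [hseq]
    have e1 : (ℓ:ℤ)+2+(1:ℕ) = (ℓ:ℤ)+3 := by push_cast; ring
    have e2 : (ℓ:ℤ)+3+(1:ℕ) = (ℓ:ℤ)+4 := by push_cast; ring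
    rw [e1, e2]
    have r3 : (ℓ:ℤ)+3-1 = (ℓ:ℤ)+2 := by ring
    have r3' : (ℓ:ℤ)+3-2 = (ℓ:ℤ)+1 := by ring
    have r4 : (ℓ:ℤ)+4-1 = (ℓ:ℤ)+3 := by ring
    have r4' : (ℓ:ℤ)+4-2 = (ℓ:ℤ)+2 := by ring
    rw [r3, r3'] at h3
    rw [r4, r4'] at h4
    linear_combination c ((ℓ:ℤ)+2) * h3 - c ((ℓ:ℤ)+1) * h4
  | more j ih0 ih1 =>
    have h3 : c ((ℓ:ℤ)+4+j) = ee1 ℓ * c ((ℓ:ℤ)+4+j-1) - ee2 ℓ * c ((ℓ:ℤ)+4+j-2) :=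
      crec ℓ c hkey (by omega)
    have h4 : c ((ℓ:ℤ)+5+j) = ee1 ℓ * c ((ℓ:ℤ)+5+j-1) - ee2 ℓ * c ((ℓ:ℤ)+5+j-2) :=
      crec ℓ c hkey (by omega)
    rw [hseq]
    have e1 : (ℓ:ℤ)+2+((j:ℕ)+2:ℕ) = (ℓ:ℤ)+4+j := by push_cast; ring
    have e2 : (ℓ:ℤ)+3+((j:ℕ)+2:ℕ) = (ℓ:ℤ)+5+j := by push_cast; ring
    rw [e1, e2]
    have e3 : (ℓ:ℤ)+2+((j:ℕ)+1:ℕ) = (ℓ:ℤ)+3+j := by push_cast; ring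
    have e4 : (ℓ:ℤ)+3+((j:ℕ)+1:ℕ) = (ℓ:ℤ)+4+j := by push_cast; ring
    rw [e3, e4] at ih1
    have r1 : (ℓ:ℤ)+4+j-1 = (ℓ:ℤ)+3+j := by ring
    have r2 : (ℓ:ℤ)+4+j-2 = (ℓ:ℤ)+2+j := by ring
    have r3 : (ℓ:ℤ)+5+j-1 = (ℓ:ℤ)+4+j := by ring
    have r4 : (ℓ:ℤ)+5+j-2 = (ℓ:ℤ)+3+j := by ring
    rw [r1, r2] at h3
    rw [r3, r4] at h4
    linear_combination (ee1 ℓ) * ih1 - (ee2 ℓ) * ih0 + c ((ℓ:ℤ)+2) * h3 - c ((ℓ:ℤ)+1) * h4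

end main

/-- The 3×3 Schur determinant `s(i,j,k)`. -/
noncomputable def s3 (ℓ : ℕ) (c : ℤ → R6 ℓ) (i j k : ℤ) : R6 ℓ :=
  Matrix.det !![c i, c (i+1), c (i+2); c (j-1), c j, c (j+1); c (k-2), c (k-1), c k]

/-- The 2×2 Schur determinant `s(i,j)`. -/
noncomputable def s2 (ℓ : ℕ) (c : ℤ → R6 ℓ) (i j : ℤ) : R6 ℓ :=
  Matrix.det !![c i, c (i+1); c (j-1), c j]

section main2
variable (ℓ : ℕ) (c : ℤ → R6 ℓ)
  (hkey : ∀ n : ℤ, c n - ee1 ℓ * c (n-1) + ee2 ℓ * c (n-2) = DD ℓ n)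

include hkey

lemma sterm (j : ℕ) : s3 ℓ c ((ℓ:ℤ)+2+j) ((ℓ:ℤ)+2) ((ℓ:ℤ)-j)
    = DD ℓ ((ℓ:ℤ)-j) * (hseq ℓ j * (c ((ℓ:ℤ)+2) * c ((ℓ:ℤ)+2) - c ((ℓ:ℤ)+3) * c ((ℓ:ℤ)+1))) := by
  have k1 := hkey ((ℓ:ℤ)+4+j)
  have k2 := hkey ((ℓ:ℤ)+3)
  have k3 := hkey ((ℓ:ℤ)-j)
  rw [DD_big ℓ (by omega)] at k1
  rw [DD_big ℓ (by omega)] at k2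
  have F := Fval ℓ c hkey j
  rw [s3, Matrix.det_fin_three]
  simp only [Matrix.cons_val', Matrix.cons_val_zero, Matrix.cons_val_one, Matrix.head_cons,
    Matrix.empty_val', Matrix.cons_val_fin_one, Matrix.head_fin_const, Matrix.cons_val_two,
    Matrix.tail_cons, Matrix.of_apply, Matrix.cons_val_succ]
  have a1 : (ℓ:ℤ)+2+j+1 = (ℓ:ℤ)+3+j := by ring
  have a2 : (ℓ:ℤ)+2+j+2 = (ℓ:ℤ)+4+j := by ring
  have a3 : (ℓ:ℤ)+2-1 = (ℓ:ℤ)+1 := by ring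
  have a4 : (ℓ:ℤ)+2+1 = (ℓ:ℤ)+3 := by ring
  rw [a1, a2, a3, a4]
  have b1 : (ℓ:ℤ)+4+j-1 = (ℓ:ℤ)+3+j := by ring
  have b2 : (ℓ:ℤ)+4+j-2 = (ℓ:ℤ)+2+j := by ring
  rw [b1, b2] at k1
  have b3 : (ℓ:ℤ)+3-1 = (ℓ:ℤ)+2 := by ring
  have b4 : (ℓ:ℤ)+3-2 = (ℓ:ℤ)+1 := by ring
  rw [b3, b4] at k2
  linear_combination
    (c ((ℓ:ℤ)+1) * c ((ℓ:ℤ)-j-1) - c ((ℓ:ℤ)+2) * c ((ℓ:ℤ)-j-2)) * k1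
    + (c ((ℓ:ℤ)+3+j) * c ((ℓ:ℤ)-j-2) - c ((ℓ:ℤ)+2+j) * c ((ℓ:ℤ)-j-1)) * k2
    + (c ((ℓ:ℤ)+2+j) * c ((ℓ:ℤ)+2) - c ((ℓ:ℤ)+3+j) * c ((ℓ:ℤ)+1)) * k3
    + DD ℓ ((ℓ:ℤ)-j) * F

end main2

/-- `hh j = hseq (j-1)`, with `hh 0 = 0`. -/
noncomputable def hh (ℓ : ℕ) : ℕ → R6 ℓ
  | 0 => 0
  | (n+1) => hseq ℓ n

lemma hseq_rec (ℓ : ℕ) (i : ℕ) : hseq ℓ (i+1) = ee1 ℓ * hseq ℓ i - ee2 ℓ * hh ℓ i := by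
  cases i with
  | zero => rw [hseq, hseq, hh]; ring
  | succ n => rw [hseq, hh]

lemma tele (ℓ : ℕ) :
    ∑ i ∈ Finset.range (ℓ+1), (2:R6 ℓ)^(i+2) * hseq ℓ i * DD ℓ ((ℓ:ℤ)-i) = 4 * dV ℓ ℓ := by
  set t : ℕ → R6 ℓ := fun i =>
    2^(i+2) * hseq ℓ i * dV ℓ ((ℓ:ℤ)-i) - 2^(i+3) * ee2 ℓ * hh ℓ i * dV ℓ ((ℓ:ℤ)-1-i) with ht
  have step : ∀ i : ℕ, (2:R6 ℓ)^(i+2) * hseq ℓ i * DD ℓ ((ℓ:ℤ)-i) = t i - t (i+1) := by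
    intro i
    rw [ht]
    simp only []
    have e1 : (ℓ:ℤ) - ((i:ℕ)+1:ℕ) = (ℓ:ℤ)-1-i := by push_cast; ring
    have e2 : (ℓ:ℤ) - 1 - ((i:ℕ)+1:ℕ) = (ℓ:ℤ)-i-2 := by push_cast; ring
    rw [e1, e2, hh, DD]
    have e3 : (ℓ:ℤ)-i-1 = (ℓ:ℤ)-1-i := by ring
    rw [e3]
    have hr := hseq_rec ℓ i
    have : (2:R6 ℓ)^(i+3) = 2 * 2^(i+2) := by ring
    linear_combination (2:R6 ℓ)^(i+3) * dV ℓ ((ℓ:ℤ)-1-i) * hr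
  rw [Finset.sum_congr rfl (fun i _ => step i), Finset.sum_range_sub' t (ℓ+1)]
  have h0 : t 0 = 4 * dV ℓ ℓ := by
    rw [ht]
    simp only []
    rw [hseq, hh]
    have : (ℓ:ℤ) - ((0:ℕ):ℤ) = (ℓ:ℤ) := by push_cast; ring
    rw [this]
    ring
  have h1 : t (ℓ+1) = 0 := by
    rw [ht]
    simp only []
    rw [dV_neg ℓ (by push_cast; omega), dV_neg ℓ (by push_cast; omega)]
    ring
  rw [h0, h1]
  ring

/-- The sum `∑_{j≥1} 2^{j+1} s(ℓ+1+j, ℓ+2, ℓ+1-j)`; its terms vanish for `j > ℓ+1`,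
so it equals the finite sum over `1 ≤ j ≤ ℓ+1`. -/
theorem I22_residue_sum (ℓ : ℕ) (c : ℤ → R6 ℓ)
    (hcneg : ∀ n : ℤ, n < 0 → c n = 0)
    (hc : (1 - PowerSeries.C (R := R6 ℓ) (va ℓ) * PowerSeries.X) *
          (1 - PowerSeries.C (R := R6 ℓ) (vb ℓ) * PowerSeries.X) *
          PowerSeries.mk (fun n : ℕ => c n)
        = (1 - PowerSeries.C (R := R6 ℓ) (2 * va ℓ) * PowerSeries.X) *
          (1 - PowerSeries.C (R := R6 ℓ) (2 * vb ℓ) * PowerSeries.X) *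
          ∑ i ∈ Finset.range (ℓ + 1),
            PowerSeries.C (R := R6 ℓ) (dV ℓ i) * PowerSeries.X ^ i) :
    ∑ j ∈ Finset.Icc 1 (ℓ + 1),
        (2 : R6 ℓ) ^ (j + 1) * s3 ℓ c ((ℓ : ℤ) + 1 + j) ((ℓ : ℤ) + 2) ((ℓ : ℤ) + 1 - j)
      = 4 * dV ℓ ℓ * s2 ℓ c ((ℓ : ℤ) + 2) ((ℓ : ℤ) + 2) := by
  have hkey := key ℓ c hcneg hc
  have hIcc : Finset.Icc 1 (ℓ+1) = Finset.Ico 1 (ℓ+2) := (Finset.Ico_add_one_right_eq_Icc 1 (ℓ+1)).symm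
  rw [hIcc, Finset.sum_Ico_eq_sum_range]
  have hn : ℓ + 2 - 1 = ℓ + 1 := by omega
  rw [hn]
  have hterm : ∀ k ∈ Finset.range (ℓ+1),
      (2:R6 ℓ)^(1+k+1) * s3 ℓ c ((ℓ:ℤ)+1+((1+k:ℕ):ℤ)) ((ℓ:ℤ)+2) ((ℓ:ℤ)+1-((1+k:ℕ):ℤ))
        = (2^(k+2) * hseq ℓ k * DD ℓ ((ℓ:ℤ)-k)) *
            (c ((ℓ:ℤ)+2) * c ((ℓ:ℤ)+2) - c ((ℓ:ℤ)+3) * c ((ℓ:ℤ)+1)) := by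
    intro k _
    have i1 : (ℓ:ℤ)+1+((1+k:ℕ):ℤ) = (ℓ:ℤ)+2+k := by push_cast; ring
    have i2 : (ℓ:ℤ)+1-((1+k:ℕ):ℤ) = (ℓ:ℤ)-k := by push_cast; ring
    rw [i1, i2, sterm ℓ c hkey k]
    have h12 : 1+k+1 = k+2 := by omega
    rw [h12]
    ring
  rw [Finset.sum_congr rfl hterm, ← Finset.sum_mul, tele ℓ]
  rw [s2, Matrix.det_fin_two_of]
  have j1 : (ℓ:ℤ)+2+1 = (ℓ:ℤ)+3 := by ring
  have j2 : (ℓ:ℤ)+2-1 = (ℓ:ℤ)+1 := by ring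
  rw [j1, j2]
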